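/- Let X have support contained in {0,...,n} with p_n = P(X=n) > 0. Then ρ(X) ≥ p_n^{1/n} > 0, and for α ∈ (0,1], X ∼ α∘Z for some Z supported on {0,...,n} if and only if p_j*(α) := Σ_{k=j}^{n} C(k,j) α^{-k} (α−1)^{k−j} p_k ≥ 0 for all 0 ≤ j ≤ n−1; in that case P(Z=j) = p_j*(α) for 0 ≤ j ≤ n. -/

import Mathlib

open scoped BigOperators

/-- `IsPMF p` : `p` is a probability mass function on `ℕ`. -/
def IsPMF (p : ℕ → ℝ) : Prop :=
  (∀ n, 0 ≤ p n) ∧ HasSum p 1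

/-- Binomial `α`-thinning at the level of distributions:
`thin α p k = P(α ∘ X = k)` when `X` has pmf `p`. -/
noncomputable def thin (α : ℝ) (p : ℕ → ℝ) (k : ℕ) : ℝ :=
  ∑' n : ℕ, (n.choose k : ℝ) * α ^ k * (1 - α) ^ (n - k) * p n

/-- Convolution of two pmfs on `ℕ` (law of the sum of independent variables). -/
noncomputable def conv (p q : ℕ → ℝ) (n : ℕ) : ℝ :=
  ∑ k ∈ Finset.range (n + 1), p k * q (n - k)

/-- `MemM α p` : the distribution `p` is an `α`-thinned distribution, i.e. `p ∈ M_α`. -/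
def MemM (α : ℝ) (p : ℕ → ℝ) : Prop :=
  ∃ q : ℕ → ℝ, IsPMF q ∧ ∀ k, p k = thin α q k

/-- `rho p` : the minimal thinning parameter `ρ(X)`. -/
noncomputable def rho (p : ℕ → ℝ) : ℝ :=
  sInf {α : ℝ | α ∈ Set.Icc (0:ℝ) 1 ∧ MemM α p}



lemma swap_Icc {M} [AddCommMonoid M] (a b : ℕ) (f : ℕ → ℕ → M) :
    ∑ i ∈ Finset.Icc a b, ∑ j ∈ Finset.Icc i b, f i j
      = ∑ j ∈ Finset.Icc a b, ∑ i ∈ Finset.Icc a j, f i j := by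
  simp_rw [← Finset.Ico_add_one_right_eq_Icc]
  exact Finset.sum_Ico_Ico_comm a (b + 1) f

lemma binom_aux (x y : ℝ) {j m : ℕ} (h : j ≤ m) :
    ∑ k ∈ Finset.Icc j m, (k.choose j : ℝ) * (m.choose k : ℝ) * x ^ (k - j) * y ^ (m - k)
      = (m.choose j : ℝ) * (x + y) ^ (m - j) := by
  rw [← Finset.Ico_add_one_right_eq_Icc, Finset.sum_Ico_eq_sum_range]
  have h1 : m + 1 - j = (m - j) + 1 := by omega
  rw [h1, add_pow, Finset.mul_sum]
  refine Finset.sum_congr rfl fun t ht => ?_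
  rw [Finset.mem_range] at ht
  have hc : (m.choose (j + t) : ℝ) * ((j + t).choose j : ℝ)
      = (m.choose j : ℝ) * ((m - j).choose t : ℝ) := by
    rw [← Nat.cast_mul, ← Nat.cast_mul, Nat.choose_mul (by omega)]
    congr 3
    omega
  have e1 : j + t - j = t := by omega
  have e2 : m - (j + t) = (m - j) - t := by omega
  rw [e1, e2]
  linear_combination (x ^ t * y ^ ((m - j) - t)) * hc

lemma binom_zero {j m : ℕ} (h : j ≤ m) (x : ℝ) :
    ∑ k ∈ Finset.Icc j m, (k.choose j : ℝ) * (m.choose k : ℝ) * x ^ (k - j) * (-x) ^ (m - k)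
      = if j = m then 1 else 0 := by
  rw [binom_aux x (-x) h]
  rcases eq_or_lt_of_le h with rfl | hlt
  · simp
  · rw [if_neg hlt.ne]
    rw [add_neg_cancel, zero_pow (by omega)]
    ring

lemma zpow_cancel {α : ℝ} (hα : α ≠ 0) (k : ℕ) : α ^ (-(k : ℤ)) * α ^ k = 1 := by
  rw [← zpow_natCast α k, ← zpow_add₀ hα]
  simp

/-- orthogonality, direction 1 -/
lemma orth1 {α : ℝ} (hα : α ≠ 0) {j m : ℕ} (h : j ≤ m) :
    ∑ k ∈ Finset.Icc j m,
        ((k.choose j : ℝ) * α ^ (-(k : ℤ)) * (α - 1) ^ (k - j))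
          * ((m.choose k : ℝ) * α ^ k * (1 - α) ^ (m - k))
      = if j = m then 1 else 0 := by
  have : ∀ k ∈ Finset.Icc j m,
      ((k.choose j : ℝ) * α ^ (-(k : ℤ)) * (α - 1) ^ (k - j))
          * ((m.choose k : ℝ) * α ^ k * (1 - α) ^ (m - k))
        = (k.choose j : ℝ) * (m.choose k : ℝ) * (α - 1) ^ (k - j) * (-(α - 1)) ^ (m - k) := by
    intro k _
    have hz := zpow_cancel hα k
    have h1 : (1 - α) = -(α - 1) := by ring
    rw [h1]
    linear_combination ((k.choose j : ℝ) * (α - 1) ^ (k - j) * (m.choose k : ℝ) * (-(α - 1)) ^ (m - k)) * hz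
  rw [Finset.sum_congr rfl this, binom_zero h]

/-- orthogonality, direction 2 -/
lemma orth2 {α : ℝ} (hα : α ≠ 0) {k l : ℕ} (h : k ≤ l) :
    ∑ m ∈ Finset.Icc k l,
        ((m.choose k : ℝ) * α ^ k * (1 - α) ^ (m - k))
          * ((l.choose m : ℝ) * α ^ (-(l : ℤ)) * (α - 1) ^ (l - m))
      = if k = l then 1 else 0 := by
  have : ∀ m ∈ Finset.Icc k l,
      ((m.choose k : ℝ) * α ^ k * (1 - α) ^ (m - k))
          * ((l.choose m : ℝ) * α ^ (-(l : ℤ)) * (α - 1) ^ (l - m))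
        = (α ^ k * α ^ (-(l : ℤ))) *
            ((m.choose k : ℝ) * (l.choose m : ℝ) * (1 - α) ^ (m - k) * (-(1 - α)) ^ (l - m)) := by
    intro m _
    have h1 : (α - 1) = -(1 - α) := by ring
    rw [h1]; ring
  rw [Finset.sum_congr rfl this, ← Finset.mul_sum, binom_zero h]
  rcases eq_or_ne k l with rfl | hne
  · rw [if_pos rfl, mul_one, mul_comm]
    exact zpow_cancel hα k
  · simp [hne]

lemma thin_fin {n : ℕ} {α : ℝ} {q : ℕ → ℝ} (hq0 : ∀ m, n < m → q m = 0) (k : ℕ) :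
    thin α q k = ∑ m ∈ Finset.Icc k n, (m.choose k : ℝ) * α ^ k * (1 - α) ^ (m - k) * q m := by
  refine tsum_eq_sum ?_
  intro m hm
  rw [Finset.mem_Icc] at hm
  push_neg at hm
  by_cases h : m < k
  · rw [Nat.choose_eq_zero_of_lt h]; simp
  · have : n < m := hm (by omega)
    rw [hq0 m this, mul_zero]

/-- the inversion formula: uniqueness -/
lemma inv_q {n : ℕ} {α : ℝ} (hα : α ≠ 0) (p q : ℕ → ℝ)
    (hq0 : ∀ m, n < m → q m = 0) (hpq : ∀ k, p k = thin α q k) {j : ℕ} (hj : j ≤ n) :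
    ∑ k ∈ Finset.Icc j n, (k.choose j : ℝ) * α ^ (-(k : ℤ)) * (α - 1) ^ (k - j) * p k = q j := by
  have step1 : ∀ k ∈ Finset.Icc j n,
      (k.choose j : ℝ) * α ^ (-(k : ℤ)) * (α - 1) ^ (k - j) * p k
        = ∑ m ∈ Finset.Icc k n,
            ((k.choose j : ℝ) * α ^ (-(k : ℤ)) * (α - 1) ^ (k - j))
              * ((m.choose k : ℝ) * α ^ k * (1 - α) ^ (m - k)) * q m := by
    intro k _
    rw [hpq k, thin_fin hq0, Finset.mul_sum]
    refine Finset.sum_congr rfl fun m _ => ?_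
    ring
  rw [Finset.sum_congr rfl step1, swap_Icc]
  have step2 : ∀ m ∈ Finset.Icc j n,
      (∑ k ∈ Finset.Icc j m,
          ((k.choose j : ℝ) * α ^ (-(k : ℤ)) * (α - 1) ^ (k - j))
            * ((m.choose k : ℝ) * α ^ k * (1 - α) ^ (m - k)) * q m)
        = if j = m then q m else 0 := by
    intro m hm
    rw [Finset.mem_Icc] at hm
    rw [← Finset.sum_mul, orth1 hα hm.1]
    by_cases h : j = m <;> simp [h]
  rw [Finset.sum_congr rfl step2, Finset.sum_ite_eq]
  simp [hj]

/-- forward substitution: the candidate inverse really is a preimage -/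
lemma constr_thin {n : ℕ} {α : ℝ} (hα : α ≠ 0) (p : ℕ → ℝ) (hsupp : ∀ k, n < k → p k = 0)
    (k : ℕ) :
    p k = thin α
      (fun j => if j ≤ n then
          ∑ l ∈ Finset.Icc j n, (l.choose j : ℝ) * α ^ (-(l : ℤ)) * (α - 1) ^ (l - j) * p l
        else 0) k := by
  set Q : ℕ → ℝ := fun j => if j ≤ n then
      ∑ l ∈ Finset.Icc j n, (l.choose j : ℝ) * α ^ (-(l : ℤ)) * (α - 1) ^ (l - j) * p l
    else 0 with hQ
  have hQ0 : ∀ m, n < m → Q m = 0 := by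
    intro m hm; simp [hQ, Nat.not_le.mpr hm]
  rw [thin_fin hQ0]
  by_cases hk : k ≤ n
  · have step1 : ∀ m ∈ Finset.Icc k n,
        (m.choose k : ℝ) * α ^ k * (1 - α) ^ (m - k) * Q m
          = ∑ l ∈ Finset.Icc m n,
              ((m.choose k : ℝ) * α ^ k * (1 - α) ^ (m - k))
                * ((l.choose m : ℝ) * α ^ (-(l : ℤ)) * (α - 1) ^ (l - m)) * p l := by
      intro m hm
      rw [Finset.mem_Icc] at hm
      rw [hQ]
      simp only [if_pos hm.2]
      rw [Finset.mul_sum]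
      refine Finset.sum_congr rfl fun l _ => ?_
      ring
    rw [Finset.sum_congr rfl step1, swap_Icc]
    have step2 : ∀ l ∈ Finset.Icc k n,
        (∑ m ∈ Finset.Icc k l,
            ((m.choose k : ℝ) * α ^ k * (1 - α) ^ (m - k))
              * ((l.choose m : ℝ) * α ^ (-(l : ℤ)) * (α - 1) ^ (l - m)) * p l)
          = if k = l then p l else 0 := by
      intro l hl
      rw [Finset.mem_Icc] at hl
      rw [← Finset.sum_mul, orth2 hα hl.1]
      by_cases h : k = l <;> simp [h]
    rw [Finset.sum_congr rfl step2, Finset.sum_ite_eq]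
    simp [hk]
  · rw [Finset.Icc_eq_empty (by omega), Finset.sum_empty, hsupp k (by omega)]

/-- the candidate inverse sums to the same total -/
lemma constr_sum {n : ℕ} {α : ℝ} (hα : α ≠ 0) (p : ℕ → ℝ) :
    ∑ j ∈ Finset.Icc 0 n,
        ∑ l ∈ Finset.Icc j n, (l.choose j : ℝ) * α ^ (-(l : ℤ)) * (α - 1) ^ (l - j) * p l
      = ∑ k ∈ Finset.Icc 0 n, p k := by
  rw [swap_Icc]
  refine Finset.sum_congr rfl fun k hk => ?_
  rw [← Finset.sum_mul]
  have h1 : ∑ j ∈ Finset.Icc 0 k, (k.choose j : ℝ) * α ^ (-(k : ℤ)) * (α - 1) ^ (k - j)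
      = α ^ (-(k : ℤ)) * ∑ j ∈ Finset.Icc 0 k,
          (j.choose 0 : ℝ) * (k.choose j : ℝ) * (1:ℝ) ^ (j - 0) * (α - 1) ^ (k - j) := by
    rw [Finset.mul_sum]
    refine Finset.sum_congr rfl fun j _ => ?_
    simp [Nat.choose_zero_right]
    ring
  rw [h1, binom_aux (1:ℝ) (α - 1) (Nat.zero_le k)]
  have h2 : (1 : ℝ) + (α - 1) = α := by ring
  rw [h2]
  simp only [Nat.choose_zero_right, Nat.cast_one, one_mul, Nat.sub_zero]
  rw [zpow_cancel hα k, one_mul]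

lemma thin_one (q : ℕ → ℝ) (k : ℕ) : thin 1 q k = q k := by
  have h : ∀ m, m ∉ ({k} : Finset ℕ) →
      (m.choose k : ℝ) * 1 ^ k * (1 - 1) ^ (m - k) * q m = 0 := by
    intro m hm
    rw [Finset.mem_singleton] at hm
    rcases lt_or_gt_of_ne hm with h | h
    · rw [Nat.choose_eq_zero_of_lt h]; simp
    · rw [sub_self, zero_pow (by omega)]; ring
  rw [thin, tsum_eq_sum h, Finset.sum_singleton]
  simp

lemma thin_summable {α : ℝ} (hα0 : 0 < α) (hα1 : α ≤ 1) (q : ℕ → ℝ)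
    (hq : ∀ m, 0 ≤ q m) (hq1 : HasSum q 1) (k : ℕ) :
    Summable (fun m => (m.choose k : ℝ) * α ^ k * (1 - α) ^ (m - k) * q m) := by
  rcases eq_or_lt_of_le hα1 with rfl | hlt
  · apply summable_of_ne_finset_zero (s := ({k} : Finset ℕ))
    intro m hm
    rw [Finset.mem_singleton] at hm
    rcases lt_or_gt_of_ne hm with h | h
    · rw [Nat.choose_eq_zero_of_lt h]; simp
    · rw [sub_self, zero_pow (by omega)]; ring
  · set r : ℝ := 1 - α with hr
    have hr0 : 0 < r := by simp [hr]; linarith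
    have hr1 : r < 1 := by simp [hr]; linarith
    have hqle : ∀ m, q m ≤ 1 := fun m => le_hasSum hq1 m fun i _ => hq i
    have hbound : ∀ m, (m.choose k : ℝ) * α ^ k * r ^ (m - k) * q m
        ≤ (α ^ k / r ^ k) * ((m : ℝ) ^ k * r ^ m) := by
      intro m
      by_cases h : m < k
      · rw [Nat.choose_eq_zero_of_lt h]
        simp only [Nat.cast_zero, zero_mul]
        positivity
      · push_neg at h
        have h1 : r ^ (m - k) = r ^ m / r ^ k := by
          rw [eq_div_iff (by positivity), ← pow_add]
          congr 1; omega
        have h2 : (m.choose k : ℝ) ≤ (m : ℝ) ^ k := by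
          calc (m.choose k : ℝ) ≤ ((m ^ k : ℕ) : ℝ) := by
                exact_mod_cast Nat.choose_le_pow m k
            _ = (m : ℝ) ^ k := by push_cast; ring
        calc (m.choose k : ℝ) * α ^ k * r ^ (m - k) * q m
            ≤ (m.choose k : ℝ) * α ^ k * r ^ (m - k) * 1 := by
              apply mul_le_mul_of_nonneg_left (hqle m)
              positivity
          _ = (m.choose k : ℝ) * (α ^ k * r ^ (m - k)) := by ring
          _ ≤ (m : ℝ) ^ k * (α ^ k * r ^ (m - k)) := by
              apply mul_le_mul_of_nonneg_right h2
              positivity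
          _ = (α ^ k / r ^ k) * ((m : ℝ) ^ k * r ^ m) := by
              rw [h1]; field_simp
    refine Summable.of_nonneg_of_le (fun m => ?_) hbound ?_
    · have : (0:ℝ) ≤ (1 - α) ^ (m - k) := by positivity
      have := hq m
      positivity
    · apply Summable.mul_left
      exact summable_pow_mul_geometric_of_norm_lt_one k (by rw [Real.norm_eq_abs, abs_of_pos hr0]; exact hr1)

/-- for `X` supported on `{0,…,n}` with `p_n > 0`:
`ρ(X) ≥ p_n^{1/n} > 0`, and for `α ∈ (0,1]`, `X ∼ α∘Z` with `Z` supported on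
`{0,…,n}` iff `p_j*(α) ≥ 0` for all `j ≤ n−1`; in that case `P(Z=j) = p_j*(α)`. -/
theorem stmt_16 (n : ℕ) (hn : 1 ≤ n) (p : ℕ → ℝ) (hp : IsPMF p)
    (hsupp : ∀ k, n < k → p k = 0) (hpn : 0 < p n) :
    (0 < p n ^ ((1 : ℝ) / n) ∧ p n ^ ((1 : ℝ) / n) ≤ rho p) ∧
    ∀ α ∈ Set.Ioc (0:ℝ) 1,
      ((∃ q : ℕ → ℝ, IsPMF q ∧ (∀ k, n < k → q k = 0) ∧ ∀ k, p k = thin α q k) ↔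
          ∀ j ≤ n - 1,
            0 ≤ ∑ k ∈ Finset.Icc j n,
              (k.choose j : ℝ) * α ^ (-(k : ℤ)) * (α - 1) ^ (k - j) * p k) ∧
      (∀ q : ℕ → ℝ, IsPMF q → (∀ k, n < k → q k = 0) → (∀ k, p k = thin α q k) →
        ∀ j ≤ n, q j = ∑ k ∈ Finset.Icc j n,
          (k.choose j : ℝ) * α ^ (-(k : ℤ)) * (α - 1) ^ (k - j) * p k) := by
  obtain ⟨hpnn, hpsum⟩ := hp
  have hp1 : ∑ k ∈ Finset.Icc 0 n, p k = 1 := by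
    have hfin : ∀ m ∉ Finset.Icc 0 n, p m = 0 := by
      intro m hm
      rw [Finset.mem_Icc] at hm
      exact hsupp m (by omega)
    exact ((hasSum_sum_of_ne_finset_zero hfin).unique hpsum)
  constructor
  · constructor
    · exact Real.rpow_pos_of_pos hpn _
    · have hone : (1:ℝ) ∈ {α : ℝ | α ∈ Set.Icc (0:ℝ) 1 ∧ MemM α p} :=
        ⟨⟨zero_le_one, le_refl 1⟩, ⟨p, ⟨hpnn, hpsum⟩, fun k => (thin_one p k).symm⟩⟩
      apply le_csInf ⟨1, hone⟩
      rintro b ⟨⟨hb0, hb1⟩, q, ⟨hqn, hq1⟩, hthin⟩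
      have hbne : b ≠ 0 := by
        rintro rfl
        have h0 : p n = ∑' (_ : ℕ), (0:ℝ) := by
          rw [hthin n, thin]
          congr 1
          funext m
          rw [zero_pow (by omega : n ≠ 0)]
          ring
        rw [tsum_zero] at h0
        linarith
      have hb0' : 0 < b := lt_of_le_of_ne hb0 (Ne.symm hbne)
      have hsumm := fun k => thin_summable hb0' hb1 q hqn hq1 k
      have hq0 : ∀ m, n < m → q m = 0 := by
        intro m hm
        have h1 : (m.choose m : ℝ) * b ^ m * (1 - b) ^ (m - m) * q m
            ≤ ∑' i, (i.choose m : ℝ) * b ^ m * (1 - b) ^ (i - m) * q i := by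
          apply Summable.le_tsum (hsumm m) m
          intro i _
          have h2 : (0:ℝ) ≤ 1 - b := by linarith
          have h3 := hqn i
          positivity
        have h2 : (∑' i, (i.choose m : ℝ) * b ^ m * (1 - b) ^ (i - m) * q i) = thin b q m := rfl
        rw [h2, ← hthin m, hsupp m hm] at h1
        simp only [Nat.choose_self, Nat.cast_one, one_mul, Nat.sub_self, pow_zero, mul_one] at h1
        have h3 : 0 < b ^ m := pow_pos hb0' m
        have h4 : 0 ≤ b ^ m * q m := mul_nonneg h3.le (hqn m)
        exact (mul_eq_zero.mp (le_antisymm h1 h4)).resolve_left h3.ne'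
      have hpn_eq : p n = b ^ n * q n := by
        rw [hthin n, thin_fin hq0, Finset.Icc_self, Finset.sum_singleton]
        simp
      have hqle : q n ≤ 1 := le_hasSum hq1 n fun i _ => hqn i
      have hple : p n ≤ b ^ n := by
        have h3 : 0 < b ^ n := pow_pos hb0' n
        nlinarith
      calc p n ^ ((1:ℝ)/n) ≤ (b ^ n) ^ ((1:ℝ)/n) :=
            Real.rpow_le_rpow hpn.le hple (by positivity)
        _ = b := by
            rw [← Real.rpow_natCast b n, ← Real.rpow_mul hb0]
            rw [mul_one_div_cancel (by exact_mod_cast (by omega : n ≠ 0) : (n:ℝ) ≠ 0)]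
            exact Real.rpow_one b
  · rintro α ⟨hα0, hα1⟩
    have hαne : α ≠ 0 := hα0.ne'
    constructor
    · constructor
      · rintro ⟨q, ⟨hqn, hq1⟩, hq0, hthin⟩ j hj
        rw [inv_q hαne p q hq0 hthin (by omega : j ≤ n)]
        exact hqn j
      · intro hnn
        set Q : ℕ → ℝ := fun j => if j ≤ n then
            ∑ l ∈ Finset.Icc j n, (l.choose j : ℝ) * α ^ (-(l : ℤ)) * (α - 1) ^ (l - j) * p l
          else 0 with hQdef
        have hQ0 : ∀ k, n < k → Q k = 0 := by
          intro k hk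
          simp [hQdef, Nat.not_le.mpr hk]
        have hQnn : ∀ j, 0 ≤ Q j := by
          intro j
          by_cases hj : j ≤ n
          · rcases eq_or_lt_of_le hj with rfl | hjlt
            · simp only [hQdef, if_pos (le_refl j), Finset.Icc_self, Finset.sum_singleton]
              have h1 : (0:ℝ) ≤ α ^ (-(j : ℤ)) := zpow_nonneg hα0.le _
              simp only [Nat.choose_self, Nat.cast_one, one_mul, Nat.sub_self, pow_zero, mul_one]
              exact mul_nonneg h1 hpn.le
            · have := hnn j (by omega : j ≤ n - 1)
              simpa [hQdef, if_pos hj] using this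
          · rw [hQ0 j (by omega)]
        have hQsum : HasSum Q 1 := by
          have hfin : ∀ m ∉ Finset.Icc 0 n, Q m = 0 := by
            intro m hm
            rw [Finset.mem_Icc] at hm
            exact hQ0 m (by omega)
          have h1 : HasSum Q (∑ m ∈ Finset.Icc 0 n, Q m) := hasSum_sum_of_ne_finset_zero hfin
          have h2 : ∑ m ∈ Finset.Icc 0 n, Q m = 1 := by
            have h3 : ∀ m ∈ Finset.Icc 0 n, Q m
                = ∑ l ∈ Finset.Icc m n,
                    (l.choose m : ℝ) * α ^ (-(l : ℤ)) * (α - 1) ^ (l - m) * p l := by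
              intro m hm
              rw [Finset.mem_Icc] at hm
              simp [hQdef, if_pos hm.2]
            rw [Finset.sum_congr rfl h3, constr_sum hαne p, hp1]
          rwa [h2] at h1
        exact ⟨Q, ⟨hQnn, hQsum⟩, hQ0, fun k => by
          rw [hQdef]; exact constr_thin hαne p hsupp k⟩
    · rintro q ⟨hqn, hq1⟩ hq0 hthin j hj
      exact (inv_q hαne p q hq0 hthin hj).symm
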